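/- Let 𝕋 = ℝ/ℤ be the circle group with its usual topology. There exists a countable torsion subgroup H of G = 𝕋^ℕ (with the product topology) that is weakly controllable in G but not controllable in G. -/

import Mathlib

/-- Projection of an element of the direct product `ℕ → M` to the coordinates
in `J`. -/
def proj {M : Type*} (J : Set ℕ) (g : ℕ → M) : J → M :=
  fun j => g j

/-- A subgroup `H` of the direct product `G = M^ℕ` is *controllable* in `G` if
`p_J(H) = p_J(H ∩ ⊕_{n ∈ ℕ} M)` for every finite `J ⊆ ℕ`. -/
def Controllable {M : Type*} [AddCommGroup M] (H : AddSubgroup (ℕ → M)) : Prop :=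
  ∀ J : Set ℕ, J.Finite →
    proj J '' (H : Set (ℕ → M)) =
      proj J '' ((H : Set (ℕ → M)) ∩ {g | {n | g n ≠ 0}.Finite})

/-- A subgroup `H` of the direct product `G = M^ℕ` of a topological abelian
group is *weakly controllable* in `G` if `H ∩ ⊕_{n ∈ ℕ} M` is dense in `H`
(with respect to the Tychonoff product topology). -/
def WeaklyControllable {M : Type*} [AddCommGroup M] [TopologicalSpace M]
    (H : AddSubgroup (ℕ → M)) : Prop :=
  (H : Set (ℕ → M)) ⊆ closure ((H : Set (ℕ → M)) ∩ {g | {n | g n ≠ 0}.Finite})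

namespace CircleExample

noncomputable section

abbrev T := AddCircle (1 : ℝ)

/-- One third of the circle. -/
noncomputable def third : T := ((1/3 : ℝ) : T)

/-- Dyadic approximation of `1/3`. -/
noncomputable def skR (k : ℕ) : ℝ := (⌊(2:ℝ)^k / 3⌋ : ℝ) / 2^k

/-- Finitely supported generators. -/
noncomputable def gg (k : ℕ) : ℕ → T :=
  fun n => if n = 0 then ((skR k : ℝ) : T) else if n ≤ k then third else 0

/-- The limit element: constant `1/3`. -/
noncomputable def hh : ℕ → T := fun _ => third

/-- The subgroup of finitely supported elements. -/
def FinSuppSub : AddSubgroup (ℕ → T) where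
  carrier := {g | {n | g n ≠ 0}.Finite}
  zero_mem' := by simp
  add_mem' := by
    intro a b ha hb
    refine (ha.union hb).subset ?_
    intro n hn
    by_contra hcon
    simp only [Set.mem_union, Set.mem_setOf_eq, not_or, not_not] at hcon
    simp only [Set.mem_setOf_eq, Pi.add_apply, hcon.1, hcon.2, add_zero,
      ne_eq, not_true_eq_false] at hn
  neg_mem' := by
    intro a ha
    refine ha.subset ?_
    intro n hn
    simp only [Set.mem_setOf_eq, Pi.neg_apply, ne_eq, neg_eq_zero] at hn ⊢
    exact hn

/-- Dyadic elements of the circle. -/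
def Dy : AddSubgroup T where
  carrier := {t | ∃ m : ℕ, 2^m • t = 0}
  zero_mem' := ⟨0, by simp⟩
  add_mem' := by
    rintro a b ⟨m, hm⟩ ⟨m', hm'⟩
    refine ⟨m + m', ?_⟩
    have ha : 2^(m+m') • a = 0 := by
      rw [pow_add, mul_comm, mul_smul, hm, smul_zero]
    have hb : 2^(m+m') • b = 0 := by
      rw [pow_add, mul_smul, hm', smul_zero]
    rw [smul_add, ha, hb, add_zero]
  neg_mem' := by
    rintro a ⟨m, hm⟩
    exact ⟨m, by rw [smul_neg, hm, neg_zero]⟩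

lemma coe_int_zero (z : ℤ) : ((z : ℝ) : T) = 0 := by
  rw [AddCircle.coe_eq_zero_iff]
  exact ⟨z, by simp⟩

lemma three_smul_third : (3 : ℕ) • third = 0 := by
  rw [third, ← AddCircle.coe_nsmul]
  have : (3 : ℕ) • (1/3 : ℝ) = ((1 : ℤ) : ℝ) := by norm_num
  rw [this, coe_int_zero]

lemma two_pow_smul_sk (k : ℕ) : 2^k • ((skR k : ℝ) : T) = 0 := by
  rw [← AddCircle.coe_nsmul]
  have : (2^k : ℕ) • skR k = ((⌊(2:ℝ)^k / 3⌋ : ℤ) : ℝ) := by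
    rw [skR, nsmul_eq_mul]
    push_cast
    field_simp
  rw [this, coe_int_zero]

lemma sk_mem_Dy (k : ℕ) : ((skR k : ℝ) : T) ∈ Dy := ⟨k, two_pow_smul_sk k⟩

lemma third_not_mem_Dy : third ∉ Dy := by
  rintro ⟨m, hm⟩
  rw [third, ← AddCircle.coe_nsmul, AddCircle.coe_eq_zero_iff] at hm
  obtain ⟨z, hz⟩ := hm
  have h3 : (3 : ℝ) * z = 2^m := by
    simp only [zsmul_eq_mul, mul_one, nsmul_eq_mul] at hz
    push_cast at hz
    field_simp at hz
    linarith
  have h3' : (3 : ℤ) * z = 2^m := by exact_mod_cast h3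
  have hdvd : (3 : ℤ) ∣ 2^m := ⟨z, h3'.symm⟩
  have hp : Prime (3 : ℤ) := Int.prime_three
  have := hp.dvd_of_dvd_pow hdvd
  norm_num at this

lemma third_ne_zero : third ≠ 0 := fun h => third_not_mem_Dy (h ▸ Dy.zero_mem)

/-- Generating set. -/
def gens : Set (ℕ → T) := insert hh (Set.range gg)

/-- The subgroup `H`. -/
def H : AddSubgroup (ℕ → T) := AddSubgroup.closure gens

lemma hh_mem : hh ∈ H := AddSubgroup.subset_closure (Set.mem_insert _ _)

lemma gg_mem (k : ℕ) : gg k ∈ H :=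
  AddSubgroup.subset_closure (Set.mem_insert_of_mem _ ⟨k, rfl⟩)

lemma gg_finSupp (k : ℕ) : gg k ∈ FinSuppSub := by
  refine (Set.finite_Iic k).subset ?_
  intro n hn
  simp only [Set.mem_setOf_eq, gg] at hn
  by_contra hcon
  simp only [Set.mem_Iic, not_le] at hcon
  have h0 : n ≠ 0 := by omega
  have h1 : ¬ n ≤ k := by omega
  simp [h0, h1] at hn

/-- The structure invariant for elements of `H`. -/
lemma struct {x : ℕ → T} (hx : x ∈ H) :
    ∃ c : ℤ, {n | x n ≠ c • third}.Finite ∧ x 0 - c • third ∈ Dy := by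
  induction hx using AddSubgroup.closure_induction with
  | mem y hy =>
    rcases hy with rfl | ⟨k, rfl⟩
    · exact ⟨1, by simp [hh], by simp [hh, Dy.zero_mem]⟩
    · refine ⟨0, ?_, ?_⟩
      · simp only [zero_smul]
        exact gg_finSupp k
      · simpa [gg] using sk_mem_Dy k
  | zero => exact ⟨0, by simp, by simpa using Dy.zero_mem⟩
  | add x y hx hy ihx ihy =>
    obtain ⟨c, hcf, hc0⟩ := ihx
    obtain ⟨d, hdf, hd0⟩ := ihy
    refine ⟨c + d, ?_, ?_⟩
    · refine (hcf.union hdf).subset ?_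
      intro n hn
      by_contra hcon
      simp only [Set.mem_union, Set.mem_setOf_eq, not_or, not_not] at hcon
      simp only [Set.mem_setOf_eq, Pi.add_apply, hcon.1, hcon.2, add_smul,
        ne_eq, not_true_eq_false] at hn
    · have : (x + y) 0 - (c + d) • third =
          (x 0 - c • third) + (y 0 - d • third) := by
        simp only [Pi.add_apply, add_smul]
        abel
      rw [this]
      exact Dy.add_mem hc0 hd0
  | neg x hx ihx =>
    obtain ⟨c, hcf, hc0⟩ := ihx
    refine ⟨-c, ?_, ?_⟩
    · refine hcf.subset ?_
      intro n hn hxn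
      exact hn (by simp only [Pi.neg_apply, neg_smul, Set.mem_setOf_eq, hxn])
    · have : (-x) 0 - (-c) • third = -(x 0 - c • third) := by
        simp only [Pi.neg_apply, neg_smul]
        abel
      rw [this]
      exact Dy.neg_mem hc0

lemma tendsto_skR : Filter.Tendsto skR Filter.atTop (nhds (1/3 : ℝ)) := by
  have hlow : Filter.Tendsto (fun k : ℕ => (1/3 : ℝ) - (1/2)^k)
      Filter.atTop (nhds (1/3 : ℝ)) := by
    have h1 : Filter.Tendsto (fun _ : ℕ => (1/3 : ℝ)) Filter.atTop (nhds (1/3 : ℝ)) :=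
      tendsto_const_nhds
    have h2 : Filter.Tendsto (fun k : ℕ => ((1:ℝ)/2)^k) Filter.atTop (nhds 0) :=
      tendsto_pow_atTop_nhds_zero_of_lt_one (by norm_num) (by norm_num)
    simpa using h1.sub h2
  refine tendsto_of_tendsto_of_tendsto_of_le_of_le hlow tendsto_const_nhds ?_ ?_
  · intro k
    have h2 : (0:ℝ) < 2^k := by positivity
    have hf2 := Int.sub_one_lt_floor ((2:ℝ)^k / 3)
    have hba : ((1:ℝ)/2)^k * 2^k = 1 := by
      rw [← mul_pow]; norm_num
    rw [skR, le_div_iff₀ h2]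
    nlinarith
  · intro k
    have h2 : (0:ℝ) < 2^k := by positivity
    have hf := Int.floor_le ((2:ℝ)^k / 3)
    rw [skR, div_le_iff₀ h2]
    linarith

lemma tendsto_gg : Filter.Tendsto gg Filter.atTop (nhds hh) := by
  rw [tendsto_pi_nhds]
  intro n
  rcases Nat.eq_zero_or_pos n with rfl | hn
  · have hc : Filter.Tendsto (fun r : ℝ => (r : T)) (nhds (1/3 : ℝ)) (nhds third) :=
      ((AddCircle.continuous_mk' (1:ℝ)).tendsto _)
    have : Filter.Tendsto (fun k => ((skR k : ℝ) : T)) Filter.atTop (nhds third) :=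
      hc.comp tendsto_skR
    simpa [gg, hh] using this
  · have hev : ∀ᶠ k in Filter.atTop, gg k n = hh n := by
      filter_upwards [Filter.eventually_ge_atTop n] with k hk
      have h0 : n ≠ 0 := Nat.pos_iff_ne_zero.mp hn
      simp [gg, hh, h0, hk]
    exact Filter.Tendsto.congr' (hev.mono fun k hk => hk.symm) tendsto_const_nhds

/-- Homomorphism used for countability. -/
noncomputable def ψ : (ℕ →₀ ℤ) →+ (ℕ → T) :=
  Finsupp.liftAddHom (fun k => zmultiplesHom _ (gg k))

noncomputable def Φ : ℤ × (ℕ →₀ ℤ) →+ (ℕ → T) :=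
  (zmultiplesHom _ hh).coprod ψ

lemma H_le_range : H ≤ Φ.range := by
  rw [H, AddSubgroup.closure_le]
  rintro x (rfl | ⟨k, rfl⟩)
  · exact ⟨(1, 0), by simp [Φ, ψ]⟩
  · refine ⟨(0, Finsupp.single k 1), ?_⟩
    simp [Φ, ψ, Finsupp.liftAddHom_apply_single]

lemma H_countable : (H : Set (ℕ → T)).Countable := by
  have : (H : Set (ℕ → T)) ⊆ Set.range Φ := by
    intro x hx
    exact H_le_range hx
  exact (Set.countable_range Φ).mono this

lemma H_torsion : ∀ x ∈ H, IsOfFinAddOrder x := by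
  intro x hx
  induction hx using AddSubgroup.closure_induction with
  | mem y hy =>
    rw [isOfFinAddOrder_iff_nsmul_eq_zero]
    rcases hy with rfl | ⟨k, rfl⟩
    · refine ⟨3, by norm_num, ?_⟩
      funext n
      simpa [hh] using three_smul_third
    · refine ⟨3 * 2^k, by positivity, ?_⟩
      funext n
      rcases Nat.eq_zero_or_pos n with rfl | hn
      · show (3 * 2^k) • gg k 0 = 0
        have hg0 : gg k 0 = ((skR k : ℝ) : T) := by simp [gg]
        rw [hg0, mul_smul, two_pow_smul_sk, smul_zero]
      · show (3 * 2^k) • gg k n = 0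
        have h0 : n ≠ 0 := Nat.pos_iff_ne_zero.mp hn
        by_cases hk : n ≤ k
        · have hgn : gg k n = third := by simp [gg, h0, hk]
          rw [hgn, mul_comm, mul_smul, three_smul_third, smul_zero]
        · simp [gg, h0, hk]
  | zero => exact IsOfFinAddOrder.zero
  | add a b _ _ iha ihb => exact iha.add ihb
  | neg a _ iha => exact iha.neg

lemma weakly : WeaklyControllable H := by
  intro x hx
  have hset : (H : Set (ℕ → T)) ∩ {g : ℕ → T | {n | g n ≠ 0}.Finite} =
      ((H ⊓ FinSuppSub : AddSubgroup (ℕ → T)) : Set (ℕ → T)) := rfl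
  rw [hset]
  have hle : H ≤ (H ⊓ FinSuppSub).topologicalClosure := by
    rw [H, AddSubgroup.closure_le]
    rintro y (rfl | ⟨k, rfl⟩)
    · have : hh ∈ closure ((H ⊓ FinSuppSub : AddSubgroup (ℕ → T)) : Set (ℕ → T)) := by
        refine mem_closure_of_tendsto tendsto_gg ?_
        filter_upwards with k
        exact ⟨gg_mem k, gg_finSupp k⟩
      exact this
    · exact subset_closure ⟨gg_mem k, gg_finSupp k⟩
  exact hle hx

lemma not_controllable : ¬ Controllable H := by
  intro hC
  have h01 := hC {0} (Set.finite_singleton 0)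
  have hmem : proj {0} hh ∈ proj ({0} : Set ℕ) '' (H : Set (ℕ → T)) :=
    ⟨hh, hh_mem, rfl⟩
  rw [h01] at hmem
  obtain ⟨x, ⟨hxH, hxfin⟩, hproj⟩ := hmem
  have hx0 : x 0 = third := by
    have := congrFun hproj ⟨0, rfl⟩
    simpa [proj, hh] using this
  obtain ⟨c, hcf, hc0⟩ := struct hxH
  have hct : c • third = 0 := by
    by_contra hne
    have hcof : ({n | x n ≠ 0} ∪ {n | x n ≠ c • third}).Finite := hxfin.union hcf
    obtain ⟨n, hn⟩ := hcof.infinite_compl.nonempty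
    simp only [Set.mem_compl_iff, Set.mem_union, Set.mem_setOf_eq, not_or,
      not_not] at hn
    exact hne (hn.2 ▸ hn.1 ▸ rfl)
  rw [hx0, hct, sub_zero] at hc0
  exact third_not_mem_Dy hc0

end

end CircleExample

theorem exists_countable_torsion_weaklyControllable_not_controllable_circle :
    ∃ H : AddSubgroup (ℕ → AddCircle (1 : ℝ)),
      (H : Set (ℕ → AddCircle (1 : ℝ))).Countable ∧
      (∀ h ∈ H, IsOfFinAddOrder h) ∧
      WeaklyControllable H ∧ ¬ Controllable H :=
  ⟨CircleExample.H, CircleExample.H_countable, CircleExample.H_torsion,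
    CircleExample.weakly, CircleExample.not_controllable⟩
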